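/- Converse discrete Lelieuvre construction for the 7-point scheme: let n : ℤ² → ℝ³ and a, b, s, f : ℤ² → ℝ satisfy, for all (m,n), a(m,n)·n(m+1,n) + a(m−1,n)·n(m−1,n) + b(m,n)·n(m,n+1) + b(m,n−1)·n(m,n−1) + s(m−1,n)·n(m−1,n+1) + s(m,n−1)·n(m+1,n−1) = f(m,n)·n(m,n). Then there exists r : ℤ² → ℝ³ such that for all (m,n): Δ_n r(m,n) = n(m,n) × ( a(m−1,n)·n(m−1,n) + s(m−1,n)·n(m−1,n+1) ) and Δ_m r(m,n) = −n(m,n) × ( b(m,n−1)·n(m,n−1) + s(m,n−1)·n(m+1,n−1) ); moreover any such r satisfies ⟨n(m,n), Δ_m r(m,n)⟩ = 0 = ⟨n(m,n), Δ_n r(m,n)⟩ for all (m,n), i.e. r is a 2D lattice having n as a lower co-normal field. -/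

import Mathlib

open Matrix

noncomputable def psum (g : ℤ → (Fin 3 → ℝ)) (t : ℤ) : Fin 3 → ℝ :=
  (∑ i ∈ Finset.range t.toNat, g i) - ∑ i ∈ Finset.range (-t).toNat, g (-(i : ℤ) - 1)

lemma psum_zero (g : ℤ → (Fin 3 → ℝ)) : psum g 0 = 0 := by simp [psum]

lemma psum_succ (g : ℤ → (Fin 3 → ℝ)) (t : ℤ) : psum g (t + 1) - psum g t = g t := by
  unfold psum
  rcases le_or_gt 0 t with ht | ht
  · have h1 : (t + 1).toNat = t.toNat + 1 := by omega
    have h2 : (-t).toNat = 0 := by omega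
    have h3 : (-(t + 1)).toNat = 0 := by omega
    have h4 : ((t.toNat : ℤ)) = t := by omega
    rw [h1, h2, h3, Finset.sum_range_succ, h4]
    simp
  · have h1 : (t + 1).toNat = 0 := by omega
    have h2 : t.toNat = 0 := by omega
    have h3 : (-t).toNat = (-(t + 1)).toNat + 1 := by omega
    have h4 : (-(((-(t + 1)).toNat : ℤ)) - 1) = t := by omega
    rw [h1, h2, h3, Finset.sum_range_succ, h4]
    simp

noncomputable def Gf (n : ℤ → ℤ → (Fin 3 → ℝ)) (a s : ℤ → ℤ → ℝ) (m k : ℤ) : Fin 3 → ℝ :=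
  n m k ⨯₃ (a (m - 1) k • n (m - 1) k + s (m - 1) k • n (m - 1) (k + 1))

noncomputable def Hf (n : ℤ → ℤ → (Fin 3 → ℝ)) (b s : ℤ → ℤ → ℝ) (m k : ℤ) : Fin 3 → ℝ :=
  -(n m k ⨯₃ (b m (k - 1) • n m (k - 1) + s m (k - 1) • n (m + 1) (k - 1)))

lemma compat (n : ℤ → ℤ → (Fin 3 → ℝ)) (a b s f : ℤ → ℤ → ℝ)
    (hscheme : ∀ m k : ℤ,
      a m k • n (m + 1) k + a (m - 1) k • n (m - 1) k
        + b m k • n m (k + 1) + b m (k - 1) • n m (k - 1)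
        + s (m - 1) k • n (m - 1) (k + 1) + s m (k - 1) • n (m + 1) (k - 1)
      = f m k • n m k) (m k : ℤ) :
    Gf n a s (m + 1) k + Hf n b s m k = Gf n a s m k + Hf n b s m (k + 1) := by
  unfold Gf Hf
  have e1 : (m : ℤ) + 1 - 1 = m := by ring
  have e2 : (k : ℤ) + 1 - 1 = k := by ring
  rw [e1, e2]
  funext i
  have h0 := congrFun (hscheme m k) 0
  have h1 := congrFun (hscheme m k) 1
  have h2 := congrFun (hscheme m k) 2
  simp [Pi.add_apply, Pi.smul_apply, smul_eq_mul] at h0 h1 h2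
  fin_cases i
  · simp [crossProduct, Pi.add_apply, Pi.smul_apply, smul_eq_mul]
    linear_combination n m k 2 * h1 - n m k 1 * h2
  · simp [crossProduct, Pi.add_apply, Pi.smul_apply, smul_eq_mul]
    linear_combination n m k 0 * h2 - n m k 2 * h0
  · simp [crossProduct, Pi.add_apply, Pi.smul_apply, smul_eq_mul]
    linear_combination n m k 1 * h0 - n m k 0 * h1

/-- Converse discrete Lelieuvre construction for the 7-point scheme: if the
co-normal field `n` satisfies the vector 7-point scheme, then there exists a
lattice `r` satisfying the discrete Lelieuvre relations, and any such `r` has `n`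
as a lower co-normal field. -/
theorem converse_discrete_lelieuvre_7point
    (n : ℤ → ℤ → (Fin 3 → ℝ)) (a b s f : ℤ → ℤ → ℝ)
    (hscheme : ∀ m k : ℤ,
      a m k • n (m + 1) k + a (m - 1) k • n (m - 1) k
        + b m k • n m (k + 1) + b m (k - 1) • n m (k - 1)
        + s (m - 1) k • n (m - 1) (k + 1) + s m (k - 1) • n (m + 1) (k - 1)
      = f m k • n m k) :
    (∃ r : ℤ → ℤ → (Fin 3 → ℝ), ∀ m k : ℤ,
        r m (k + 1) - r m k
          = n m k ⨯₃ (a (m - 1) k • n (m - 1) k + s (m - 1) k • n (m - 1) (k + 1)) ∧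
        r (m + 1) k - r m k
          = -(n m k ⨯₃ (b m (k - 1) • n m (k - 1) + s m (k - 1) • n (m + 1) (k - 1)))) ∧
    (∀ r : ℤ → ℤ → (Fin 3 → ℝ),
      (∀ m k : ℤ,
        r m (k + 1) - r m k
          = n m k ⨯₃ (a (m - 1) k • n (m - 1) k + s (m - 1) k • n (m - 1) (k + 1)) ∧
        r (m + 1) k - r m k
          = -(n m k ⨯₃ (b m (k - 1) • n m (k - 1) + s m (k - 1) • n (m + 1) (k - 1)))) →
      ∀ m k : ℤ,
        n m k ⬝ᵥ (r (m + 1) k - r m k) = 0 ∧ n m k ⬝ᵥ (r m (k + 1) - r m k) = 0) := by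
  constructor
  · -- existence
    refine ⟨fun m k => psum (fun i => Hf n b s i 0) m + psum (fun j => Gf n a s m j) k, ?_⟩
    intro m k
    constructor
    · have := psum_succ (fun j => Gf n a s m j) k
      show _ = Gf n a s m k
      rw [← this]; simp only [add_sub_add_left_eq_sub]
    · show _ = Hf n b s m k
      have hdiff : ∀ t : ℤ,
          psum (fun j => Gf n a s (m + 1) j) t - psum (fun j => Gf n a s m j) t
            = Hf n b s m t - Hf n b s m 0 := by
        intro t
        induction t using Int.induction_on with
        | zero => simp [psum_zero]
        | succ i ih =>
          have h1 := psum_succ (fun j => Gf n a s (m + 1) j) i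
          have h2 := psum_succ (fun j => Gf n a s m j) i
          have hc := compat n a b s f hscheme m i
          have : psum (fun j => Gf n a s (m + 1) j) (i + 1)
              = psum (fun j => Gf n a s (m + 1) j) i + Gf n a s (m + 1) i := by
            rw [← h1]; abel
          rw [this]
          have : psum (fun j => Gf n a s m j) ((i : ℤ) + 1)
              = psum (fun j => Gf n a s m j) i + Gf n a s m i := by
            rw [← h2]; abel
          rw [this]
          have hG : Gf n a s (m + 1) i - Gf n a s m i
              = Hf n b s m (i + 1) - Hf n b s m i := by
            rw [← sub_eq_zero] at hc ⊢; rw [← hc]; abel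
          calc psum (fun j => Gf n a s (m + 1) j) i + Gf n a s (m + 1) i
                - (psum (fun j => Gf n a s m j) i + Gf n a s m i)
              = (psum (fun j => Gf n a s (m + 1) j) i - psum (fun j => Gf n a s m j) i)
                + (Gf n a s (m + 1) i - Gf n a s m i) := by abel
            _ = (Hf n b s m i - Hf n b s m 0) + (Hf n b s m (i + 1) - Hf n b s m i) := by
                rw [ih, hG]
            _ = Hf n b s m (i + 1) - Hf n b s m 0 := by abel
        | pred i ih =>
          have e : (-(i : ℤ) - 1) + 1 = -i := by ring
          have h1 := psum_succ (fun j => Gf n a s (m + 1) j) (-(i : ℤ) - 1)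
          have h2 := psum_succ (fun j => Gf n a s m j) (-(i : ℤ) - 1)
          rw [e] at h1 h2
          have hc := compat n a b s f hscheme m (-(i : ℤ) - 1)
          rw [e] at hc
          have hG : Gf n a s (m + 1) (-(i : ℤ) - 1) - Gf n a s m (-(i : ℤ) - 1)
              = Hf n b s m (-(i : ℤ)) - Hf n b s m (-(i : ℤ) - 1) := by
            rw [← sub_eq_zero] at hc ⊢; rw [← hc]; abel
          calc psum (fun j => Gf n a s (m + 1) j) (-(i : ℤ) - 1)
                - psum (fun j => Gf n a s m j) (-(i : ℤ) - 1)
              = (psum (fun j => Gf n a s (m + 1) j) (-(i : ℤ))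
                  - psum (fun j => Gf n a s m j) (-(i : ℤ)))
                - (Gf n a s (m + 1) (-(i : ℤ) - 1) - Gf n a s m (-(i : ℤ) - 1)) := by
                rw [← h1, ← h2]; abel
            _ = (Hf n b s m (-(i : ℤ)) - Hf n b s m 0)
                - (Hf n b s m (-(i : ℤ)) - Hf n b s m (-(i : ℤ) - 1)) := by rw [ih, hG]
            _ = Hf n b s m (-(i : ℤ) - 1) - Hf n b s m 0 := by abel
      have hm := psum_succ (fun i => Hf n b s i 0) m
      have hk := hdiff k
      calc (psum (fun i => Hf n b s i 0) (m + 1) + psum (fun j => Gf n a s (m + 1) j) k)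
            - (psum (fun i => Hf n b s i 0) m + psum (fun j => Gf n a s m j) k)
          = (psum (fun i => Hf n b s i 0) (m + 1) - psum (fun i => Hf n b s i 0) m)
            + (psum (fun j => Gf n a s (m + 1) j) k - psum (fun j => Gf n a s m j) k) := by
            abel
        _ = Hf n b s m 0 + (Hf n b s m k - Hf n b s m 0) := by rw [hm, hk]
        _ = Hf n b s m k := by abel
  · -- any such r has n as lower co-normal
    intro r hr m k
    have key : ∀ v w₁ w₂ : Fin 3 → ℝ, ∀ c₁ c₂ : ℝ, v ⬝ᵥ (v ⨯₃ (c₁ • w₁ + c₂ • w₂)) = 0 := by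
      intro v w₁ w₂ c₁ c₂
      rw [LinearMap.map_add, LinearMap.map_smul, LinearMap.map_smul, dotProduct_add,
        dotProduct_smul, dotProduct_smul, dot_self_cross, dot_self_cross]
      simp
    constructor
    · rw [(hr m k).2, dotProduct_neg, key, neg_zero]
    · rw [(hr m k).1]
      exact key _ _ _ _ _
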